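/- Let n, l, l' be natural numbers with l < l' < n, and let i < 2^n satisfy Nat.testBit i l = true and Nat.testBit i l' = false. Then i ≼ₙ (i − 2^l + 2^(l')); that is, moving a single 1-digit of i to a more significant position among the first n binary digits yields an index above i in the universal partial order (the move is generated by adjacent left-swap steps). -/

import Mathlib

lemma pow_decomp (i m : ℕ) : i = 2 ^ (m + 1) * (i / 2 ^ (m + 1)) + i % 2 ^ (m + 1) :=
  (Nat.div_add_mod i (2 ^ (m + 1))).symm

lemma tb_add {i m : ℕ} (h : Nat.testBit i m = false) (k : ℕ) :
    Nat.testBit (i + 2 ^ m) k = (Nat.testBit i k || decide (k = m)) := by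
  set a := i / 2 ^ (m + 1) with ha
  set b := i % 2 ^ (m + 1) with hb'
  have hdec : i = 2 ^ (m + 1) * a + b := pow_decomp i m
  have hb2 : b < 2 ^ (m + 1) := Nat.mod_lt _ (Nat.pow_pos (by norm_num))
  have hbm : Nat.testBit b m = false := by
    rw [hb', Nat.testBit_mod_two_pow]
    simp [h]
  have hbm' : b < 2 ^ m := by
    by_contra hc
    push_neg at hc
    have : Nat.testBit b m = true := by
      rw [Nat.testBit_eq_decide_div_mod_eq]
      have h1 : b / 2 ^ m = 1 := by
        have := Nat.pow_succ 2 m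
        have h2 : b / 2 ^ m < 2 := by
          apply Nat.div_lt_of_lt_mul; omega
        have h3 : 1 ≤ b / 2 ^ m := (Nat.one_le_div_iff (Nat.pow_pos (by norm_num))).2 hc
        omega
      simp [h1]
    simp [this] at hbm
  have key : i + 2 ^ m = 2 ^ (m + 1) * a + (2 ^ m + b) := by omega
  rw [key, Nat.testBit_two_pow_mul_add a (by omega : 2 ^ m + b < 2 ^ (m + 1)) k]
  conv_rhs => rw [hdec, Nat.testBit_two_pow_mul_add a hb2 k]
  rcases lt_trichotomy k m with hk | rfl | hk
  · rw [if_pos (by omega), if_pos (by omega), Nat.testBit_two_pow_add_gt hk]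
    simp [Nat.ne_of_lt hk]
  · rw [if_pos (by omega), if_pos (by omega), Nat.testBit_two_pow_add_eq, hbm]
    simp
  · rcases Nat.lt_or_ge k (m + 1) with hk1 | hk1
    · omega
    · rw [if_neg (by omega), if_neg (by omega)]
      simp [Nat.ne_of_gt hk]

lemma tb_sub {i l : ℕ} (h : Nat.testBit i l = true) (k : ℕ) :
    Nat.testBit (i - 2 ^ l) k = (Nat.testBit i k && !decide (k = l)) := by
  set a := i / 2 ^ (l + 1) with ha
  set b := i % 2 ^ (l + 1) with hb'
  have hdec : i = 2 ^ (l + 1) * a + b := pow_decomp i l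
  have hb2 : b < 2 ^ (l + 1) := Nat.mod_lt _ (Nat.pow_pos (by norm_num))
  have hbl : Nat.testBit b l = true := by
    rw [hb', Nat.testBit_mod_two_pow]
    simp [h]
  have hble : 2 ^ l ≤ b := Nat.ge_two_pow_of_testBit hbl
  have hbl' : b - 2 ^ l < 2 ^ l := by
    have := Nat.pow_succ 2 l
    omega
  have key : i - 2 ^ l = 2 ^ (l + 1) * a + (b - 2 ^ l) := by omega
  rw [key, Nat.testBit_two_pow_mul_add a (by omega : b - 2 ^ l < 2 ^ (l + 1)) k]
  conv_rhs => rw [hdec, Nat.testBit_two_pow_mul_add a hb2 k]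
  rcases lt_trichotomy k l with hk | rfl | hk
  · rw [if_pos (by omega), if_pos (by omega)]
    have hb3 : b = 2 ^ l + (b - 2 ^ l) := by omega
    conv_rhs => rw [hb3]
    rw [Nat.testBit_two_pow_add_gt hk]
    simp [Nat.ne_of_lt hk]
  · rw [if_pos (by omega), if_pos (by omega), Nat.testBit_lt_two_pow hbl']
    simp
  · rcases Nat.lt_or_ge k (l + 1) with hk1 | hk1
    · omega
    · rw [if_neg (by omega), if_neg (by omega)]
      simp [Nat.ne_of_gt hk]

/-- Left-swap step: a single `1` digit of `i` is moved one position up. -/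
def LeftSwapStep (n i j : ℕ) : Prop :=
  ∃ l, l + 1 < n ∧ Nat.testBit i l = true ∧ Nat.testBit i (l + 1) = false ∧
    j = i - 2 ^ l + 2 ^ (l + 1)

/-- Binary-domination step at `n` bits. -/
def BinDomStep (n i j : ℕ) : Prop :=
  j < 2 ^ n ∧ ∀ k, Nat.testBit i k ≤ Nat.testBit j k

/-- Universal partial order at `n` bits: reflexive-transitive closure of the union of
left-swap and binary-domination steps. -/
def UPO (n : ℕ) : ℕ → ℕ → Prop :=
  Relation.ReflTransGen (fun i j => LeftSwapStep n i j ∨ BinDomStep n i j)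

lemma upo_aux (n : ℕ) : ∀ d l i, l + d + 1 < n → Nat.testBit i l = true →
    Nat.testBit i (l + d + 1) = false → UPO n i (i - 2 ^ l + 2 ^ (l + d + 1)) := by
  intro d
  induction d with
  | zero =>
    intro l i hn hbl hbl'
    exact Relation.ReflTransGen.single (Or.inl ⟨l, by simpa using hn, hbl, hbl', rfl⟩)
  | succ d ih =>
    intro l i hn hbl hbl'
    have hln : l + 1 < n := by omega
    cases h1 : Nat.testBit i (l + 1) with
    | false =>
      -- first swap l up to l+1, then use ih from l+1
      set j := i - 2 ^ l + 2 ^ (l + 1) with hj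
      have hstep : LeftSwapStep n i j := ⟨l, hln, hbl, h1, rfl⟩
      have htbs : ∀ k, Nat.testBit (i - 2 ^ l) k = (Nat.testBit i k && !decide (k = l)) :=
        tb_sub hbl
      have h0 : Nat.testBit (i - 2 ^ l) (l + 1) = false := by
        rw [htbs]; simp [h1]
      have htb : ∀ k, Nat.testBit j k =
          ((Nat.testBit i k && !decide (k = l)) || decide (k = l + 1)) := by
        intro k
        rw [hj, tb_add h0 k, htbs]
      have hjl1 : Nat.testBit j (l + 1) = true := by rw [htb]; simp
      have hjl' : Nat.testBit j (l + 1 + d + 1) = false := by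
        rw [htb]
        have e1 : ¬ (l + 1 + d + 1 = l) := by omega
        have e2 : ¬ (l + 1 + d + 1 = l + 1) := by omega
        have : Nat.testBit i (l + 1 + d + 1) = false := by
          have : l + 1 + d + 1 = l + (d + 1) + 1 := by omega
          rw [this]; exact hbl'
        simp [e1, e2, this]
        omega
      have hrest := ih (l + 1) j (by omega) hjl1 hjl'
      have heq : j - 2 ^ (l + 1) + 2 ^ (l + 1 + d + 1) =
          i - 2 ^ l + 2 ^ (l + (d + 1) + 1) := by
        have h2 : l + 1 + d + 1 = l + (d + 1) + 1 := by omega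
        rw [hj, h2, Nat.add_sub_cancel]
      rw [heq] at hrest
      exact Relation.ReflTransGen.head (Or.inl hstep) hrest
    | true =>
      -- first move bit l+1 up to l', then swap l up to l+1
      have hbl'2 : Nat.testBit i (l + 1 + d + 1) = false := by
        have : l + 1 + d + 1 = l + (d + 1) + 1 := by omega
        rw [this]; exact hbl'
      have hmove := ih (l + 1) i (by omega) h1 hbl'2
      set j := i - 2 ^ (l + 1) + 2 ^ (l + 1 + d + 1) with hj
      have htbs : ∀ k, Nat.testBit (i - 2 ^ (l + 1)) k =
          (Nat.testBit i k && !decide (k = l + 1)) := tb_sub h1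
      have h0 : Nat.testBit (i - 2 ^ (l + 1)) (l + 1 + d + 1) = false := by
        rw [htbs]
        have : Nat.testBit i (l + 1 + d + 1) = false := hbl'2
        simp [this]
      have htb : ∀ k, Nat.testBit j k =
          ((Nat.testBit i k && !decide (k = l + 1)) || decide (k = l + 1 + d + 1)) := by
        intro k
        rw [hj, tb_add h0 k, htbs]
      have hjl : Nat.testBit j l = true := by
        rw [htb]
        have e1 : ¬ (l = l + 1) := by omega
        have e2 : ¬ (l = l + 1 + d + 1) := by omega
        simp [e1, e2, hbl]
      have hjl1 : Nat.testBit j (l + 1) = false := by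
        rw [htb]
        have e2 : ¬ (l + 1 = l + 1 + d + 1) := by omega
        simp [e2]
        omega
      have hstep : LeftSwapStep n j (j - 2 ^ l + 2 ^ (l + 1)) := ⟨l, hln, hjl, hjl1, rfl⟩
      have heq : j - 2 ^ l + 2 ^ (l + 1) = i - 2 ^ l + 2 ^ (l + (d + 1) + 1) := by
        have hA : 2 ^ l ≤ i := Nat.ge_two_pow_of_testBit hbl
        have hB : 2 ^ (l + 1) ≤ i - 2 ^ l := by
          apply Nat.ge_two_pow_of_testBit
          rw [tb_sub hbl]
          simp [h1]
        have h2 : l + 1 + d + 1 = l + (d + 1) + 1 := by omega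
        rw [hj, h2]
        generalize 2 ^ l = A at *
        generalize 2 ^ (l + 1) = B at *
        generalize 2 ^ (l + (d + 1) + 1) = C at *
        omega
      rw [heq] at hstep
      exact Relation.ReflTransGen.tail hmove (Or.inl hstep)

/-- Moving a single `1` digit of `i` to any more significant position below `n` yields an
index above `i` in the universal partial order. -/
theorem upo_single_bit_move (n l l' i : ℕ) (hll' : l < l') (hl'n : l' < n)
    (hi : i < 2 ^ n) (hbl : Nat.testBit i l = true) (hbl' : Nat.testBit i l' = false) :
    UPO n i (i - 2 ^ l + 2 ^ l') := by
  have h : l' = l + (l' - l - 1) + 1 := by omega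
  rw [h] at hbl' hl'n ⊢
  exact upo_aux n (l' - l - 1) l i hl'n hbl hbl'
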